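/- Let T > 0 and let (α, β) : [0, T] → ℝ² be differentiable with α'(t) = 4 − α(t)² and β'(t) = 1 − α(t)β(t) + β(t)² for all t ∈ [0, T]. If α(t) ∈ (−2, 2) for all t ∈ [0, T] and α(0) > 2β(0), then α(t) > 2β(t) for all t ∈ [0, T]. -/

import Mathlib

/-- Forward invariance of the region `{α > 2β}` for the Whitham system
`α' = 4 − α²`, `β' = 1 − αβ + β²`, as long as `α` stays in `(−2, 2)`. -/
theorem stmt_11 (T : ℝ) (hT : 0 < T) (α β : ℝ → ℝ)
    (hα : ∀ t ∈ Set.Icc (0 : ℝ) T, HasDerivAt α (4 - α t ^ 2) t)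
    (hβ : ∀ t ∈ Set.Icc (0 : ℝ) T, HasDerivAt β (1 - α t * β t + β t ^ 2) t)
    (hrange : ∀ t ∈ Set.Icc (0 : ℝ) T, α t ∈ Set.Ioo (-2 : ℝ) 2)
    (h0 : 2 * β 0 < α 0) :
    ∀ t ∈ Set.Icc (0 : ℝ) T, 2 * β t < α t := by
  set w : ℝ → ℝ := fun t => α t - 2 * β t with hwdef
  have hw0 : 0 < w 0 := by simp only [hwdef]; linarith
  have hderiv : ∀ t ∈ Set.Icc (0 : ℝ) T,
      HasDerivAt w ((4 - α t ^ 2 - w t ^ 2) / 2) t := by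
    intro t ht
    have h := (hα t ht).sub ((hβ t ht).const_mul 2)
    refine h.congr_deriv ?_
    simp only [hwdef]; ring
  by_contra hcon
  push_neg at hcon
  obtain ⟨t₁, ht₁, ht₁'⟩ := hcon
  set S : Set ℝ := {t | t ∈ Set.Icc (0 : ℝ) T ∧ w t ≤ 0} with hSdef
  have hS_ne : S.Nonempty := ⟨t₁, ht₁, by simp only [hwdef]; linarith⟩
  have hbdd : BddBelow S := ⟨0, fun t ht => ht.1.1⟩
  set t₀ : ℝ := sInf S with ht₀def
  have ht₀0 : 0 ≤ t₀ := le_csInf hS_ne fun t ht => ht.1.1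
  have ht₀T : t₀ ≤ T := le_trans (csInf_le hbdd ⟨ht₁, by simp only [hwdef]; linarith⟩) ht₁.2
  have ht₀Icc : t₀ ∈ Set.Icc (0 : ℝ) T := ⟨ht₀0, ht₀T⟩
  have hcontw : ContinuousAt w t₀ := (hderiv t₀ ht₀Icc).continuousAt
  have hcl : t₀ ∈ closure S := csInf_mem_closure hS_ne hbdd
  have hne : (nhdsWithin t₀ S).NeBot := mem_closure_iff_nhdsWithin_neBot.mp hcl
  have htendS : Filter.Tendsto w (nhdsWithin t₀ S) (nhds (w t₀)) :=
    hcontw.tendsto.mono_left nhdsWithin_le_nhds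
  have hwt₀le : w t₀ ≤ 0 :=
    le_of_tendsto htendS (eventually_nhdsWithin_of_forall fun t ht => ht.2)
  have ht₀pos : 0 < t₀ := by
    rcases lt_or_eq_of_le ht₀0 with h | h
    · exact h
    · exact absurd hwt₀le (by rw [← h]; linarith)
  -- points before t₀ have w > 0
  have hpos : ∀ t ∈ Set.Ico (0 : ℝ) t₀, 0 < w t := by
    intro t ht
    by_contra hle
    push_neg at hle
    have : t ∈ S := ⟨⟨ht.1, le_trans ht.2.le ht₀T⟩, hle⟩
    exact absurd (csInf_le hbdd this) (not_le.mpr ht.2)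
  -- neBot of left approach within Ico 0 t₀
  have hclIco : t₀ ∈ closure (Set.Ico 0 t₀) := by
    rw [closure_Ico (ne_of_lt ht₀pos)]
    exact Set.right_mem_Icc.mpr ht₀0
  have hneIco : (nhdsWithin t₀ (Set.Ico 0 t₀)).NeBot :=
    mem_closure_iff_nhdsWithin_neBot.mp hclIco
  -- w t₀ = 0
  have hwt₀ : w t₀ = 0 := by
    have htendI : Filter.Tendsto w (nhdsWithin t₀ (Set.Ico 0 t₀)) (nhds (w t₀)) :=
      hcontw.tendsto.mono_left nhdsWithin_le_nhds
    have hge : 0 ≤ w t₀ :=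
      ge_of_tendsto htendI (eventually_nhdsWithin_of_forall fun t ht => (hpos t ht).le)
    linarith
  -- derivative at t₀ is positive
  have hα2 : α t₀ ^ 2 < 4 := by
    have := hrange t₀ ht₀Icc
    nlinarith [this.1, this.2]
  have hdpos : 0 < (4 - α t₀ ^ 2 - w t₀ ^ 2) / 2 := by
    rw [hwt₀]; nlinarith
  -- but slope from the left is ≤ 0
  have hdw : HasDerivWithinAt w ((4 - α t₀ ^ 2 - w t₀ ^ 2) / 2) (Set.Ico 0 t₀) t₀ :=
    (hderiv t₀ ht₀Icc).hasDerivWithinAt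
  rw [hasDerivWithinAt_iff_tendsto_slope] at hdw
  have hdiff : Set.Ico (0 : ℝ) t₀ \ {t₀} = Set.Ico 0 t₀ := by
    apply Set.diff_singleton_eq_self
    simp [Set.mem_Ico]
  rw [hdiff] at hdw
  have hle : (4 - α t₀ ^ 2 - w t₀ ^ 2) / 2 ≤ 0 := by
    refine le_of_tendsto hdw ?_
    refine eventually_nhdsWithin_of_forall fun t ht => ?_
    have hwt : 0 < w t := hpos t ht
    have htlt : t - t₀ < 0 := sub_neg.mpr ht.2
    rw [slope_def_field, hwt₀, sub_zero]
    exact (div_nonpos_iff.mpr (Or.inl ⟨hwt.le, htlt.le⟩))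
  linarith
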